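/- arXiv:1904.09449 — 3 statements merged into one kernel-verified Lean document; each statement's English description precedes it below -/
import Mathlib

section
/- Assume μ > 0 and 3λ + 2μ > 0, and let ξ' = (ξ₁, ξ₂) ∈ ℝ² be nonzero. Then the matrix-valued integral (1/2π) ∫_{−∞}^{∞} ℓ((ξ₁, ξ₂, t))⁻¹ dt equals −(1/(2μ|ξ'|)) ( E − ((λ+μ)/(2(λ+2μ))) ( Λ̃(ξ') + E₃₃ ) ), where Λ̃(ξ') is the 3×3 matrix whose (j,k) entry is ξ_j ξ_k / |ξ'|² for j, k ∈ {1, 2} and zero otherwise, and E₃₃ is the 3×3 matrix with a single entry 1 in position (3,3) and zeros elsewhere. This is the principal symbol of the single layer potential operator at a boundary point where the boundary coincides with the plane ξ₃ = 0. -/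
open Matrix MeasureTheory

/-- The matrix `Λ(ξ)` with entries `Λ(ξ)_{jk} = ξ_j ξ_k / |ξ|²`. -/
noncomputable def LamMat (ξ : Fin 3 → ℝ) : Matrix (Fin 3) (Fin 3) ℝ :=
  fun j k => ξ j * ξ k / (∑ i, ξ i ^ 2)

/-- The principal symbol `ℓ(ξ) = -|ξ|² (μ E + (λ+μ) Λ(ξ))` of the Lamé operator. -/
noncomputable def ell (μ lam : ℝ) (ξ : Fin 3 → ℝ) : Matrix (Fin 3) (Fin 3) ℝ :=
  -((∑ i, ξ i ^ 2) • (μ • (1 : Matrix (Fin 3) (Fin 3) ℝ) + (lam + μ) • LamMat ξ))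

/-- The matrix `Λ̃(ξ')` whose `(j,k)` entry is `ξ_j ξ_k / |ξ'|²` for `j,k ∈ {1,2}` and
zero otherwise. -/
noncomputable def LamTilde (ξ₁ ξ₂ : ℝ) : Matrix (Fin 3) (Fin 3) ℝ :=
  fun j k => (![ξ₁, ξ₂, 0] j * ![ξ₁, ξ₂, 0] k) / (ξ₁ ^ 2 + ξ₂ ^ 2)

/-- The matrix with a single entry `1` at position `(3,3)` and zeros elsewhere. -/
def E33 : Matrix (Fin 3) (Fin 3) ℝ :=
  fun j k => if j = 2 ∧ k = 2 then 1 else 0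

set_option maxHeartbeats 1000000

section Aux
open Filter Topology Real

lemma LamMat_sq (ξ : Fin 3 → ℝ) (hs : (∑ i, ξ i ^ 2) ≠ 0) :
    LamMat ξ * LamMat ξ = LamMat ξ := by
  have hs3 : ξ 0 ^ 2 + ξ 1 ^ 2 + ξ 2 ^ 2 ≠ 0 := by simpa [Fin.sum_univ_three] using hs
  ext j k
  simp only [Matrix.mul_apply, LamMat, Fin.sum_univ_three]
  field_simp

lemma ell_inv (μ lam : ℝ) (hμ : μ ≠ 0) (ha : lam + 2 * μ ≠ 0) (ξ : Fin 3 → ℝ)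
    (hs : (∑ i, ξ i ^ 2) ≠ 0) :
    (ell μ lam ξ)⁻¹ = (-(1 / (μ * (∑ i, ξ i ^ 2)))) •
      ((1 : Matrix (Fin 3) (Fin 3) ℝ) - ((lam + μ) / (lam + 2 * μ)) • LamMat ξ) := by
  set S := ∑ i, ξ i ^ 2 with hS
  set Λ := LamMat ξ with hΛ
  set c := (lam + μ) / (lam + 2 * μ) with hc
  have key : (μ • (1 : Matrix (Fin 3) (Fin 3) ℝ) + (lam + μ) • Λ) *
      ((1 : Matrix (Fin 3) (Fin 3) ℝ) - c • Λ) = μ • 1 := by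
    have hΛΛ : Λ * Λ = Λ := by rw [hΛ]; exact LamMat_sq ξ hs
    simp only [add_mul, mul_sub, mul_one, Matrix.smul_mul, Matrix.mul_smul, one_mul, hΛΛ,
      smul_smul]
    have hco : (lam + μ) = c * μ + c * (lam + μ) := by rw [hc, div_mul_eq_mul_div, div_mul_eq_mul_div, ← add_div, eq_div_iff ha]; ring
    nth_rewrite 1 [hco]
    rw [add_smul]
    abel
  have hB : ell μ lam ξ * ((-(1 / (μ * S))) •
      ((1 : Matrix (Fin 3) (Fin 3) ℝ) - c • Λ)) = 1 := by
    rw [ell, ← hS, ← hΛ, Matrix.mul_smul, Matrix.neg_mul, Matrix.smul_mul, key]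
    rw [smul_neg, smul_smul, smul_smul, show -(1 / (μ * S)) * S * μ = -1 by field_simp, neg_smul, one_smul, neg_neg]
  rw [Matrix.inv_eq_right_inv hB]

lemma cont_inv (r : ℝ) (hr : 0 < r) : Continuous fun t : ℝ => (r^2+t^2)⁻¹ :=
  (continuous_const.add (continuous_pow 2)).inv₀ (fun t => (by positivity : r^2+t^2 ≠ 0))

lemma integrable_one_add_sq_sq : Integrable fun u : ℝ => ((1+u^2)⁻¹)^2 := by
  have hc : Continuous fun u : ℝ => ((1+u^2)⁻¹)^2 :=
    ((continuous_const.add (continuous_pow 2)).inv₀ (fun t => (by positivity : (1:ℝ)+t^2 ≠ 0))).pow 2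
  refine integrable_inv_one_add_sq.mono hc.aestronglyMeasurable ?_
  · filter_upwards with u
    have h1 : (0:ℝ) < 1 + u^2 := by positivity
    have h2 : (1+u^2)⁻¹ ≤ 1 := by
      rw [inv_le_one_iff₀]; right; nlinarith
    rw [Real.norm_eq_abs, Real.norm_eq_abs, abs_of_nonneg (by positivity),
      abs_of_nonneg (by positivity), pow_two]
    nlinarith [inv_pos.2 h1]

lemma tendsto_aux_top : Tendsto (fun u : ℝ => u / (1 + u^2)) atTop (𝓝 0) := by
  have h : Tendsto (fun u : ℝ => u⁻¹ + u) atTop atTop :=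
    tendsto_inv_atTop_zero.add_atTop tendsto_id
  refine (h.inv_tendsto_atTop).congr' ?_
  filter_upwards [eventually_gt_atTop (0:ℝ)] with u hu
  simp only [Pi.inv_apply]
  rw [show u⁻¹ + u = (1+u^2)/u by field_simp, inv_div]

lemma tendsto_aux_bot : Tendsto (fun u : ℝ => u / (1 + u^2)) atBot (𝓝 0) := by
  have h := (tendsto_aux_top.comp tendsto_neg_atBot_atTop).neg
  have h2 := h.congr (fun u => by
    show -((-u) / (1+(-u)^2)) = u / (1+u^2)
    ring_nf)
  simpa using h2

lemma integral_one_add_sq_sq : ∫ u : ℝ, ((1+u^2)⁻¹)^2 = π / 2 := by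
  have hderiv : ∀ u : ℝ, HasDerivAt (fun u : ℝ => (u / (1+u^2) + Real.arctan u)/2)
      (((1+u^2)⁻¹)^2) u := by
    intro u
    have h0 : (0:ℝ) < 1 + u^2 := by positivity
    have h1 : HasDerivAt (fun u : ℝ => 1+u^2) (2*u) u := by
      simpa using (hasDerivAt_pow 2 u).const_add 1
    have h2 : HasDerivAt (fun u : ℝ => u / (1+u^2))
        ((1*(1+u^2) - u*(2*u))/(1+u^2)^2) u := (hasDerivAt_id u).div h1 h0.ne'
    have h3 := (h2.add (Real.hasDerivAt_arctan u)).div_const 2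
    refine h3.congr_deriv ?_
    field_simp
    ring
  have htop : Tendsto (fun u : ℝ => (u / (1+u^2) + Real.arctan u)/2) atTop (𝓝 (π/4)) := by
    have h := (tendsto_aux_top.add
      (tendsto_nhds_of_tendsto_nhdsWithin Real.tendsto_arctan_atTop)).div_const 2
    convert h using 2
    ring
  have hbot : Tendsto (fun u : ℝ => (u / (1+u^2) + Real.arctan u)/2) atBot (𝓝 (-(π/4))) := by
    have h := (tendsto_aux_bot.add
      (tendsto_nhds_of_tendsto_nhdsWithin Real.tendsto_arctan_atBot)).div_const 2
    convert h using 2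
    ring
  have := MeasureTheory.integral_of_hasDerivAt_of_tendsto hderiv integrable_one_add_sq_sq hbot htop
  rw [this]; ring

section Scaled
variable {r : ℝ} (hr : 0 < r)
include hr

lemma hfe1 : (fun t : ℝ => (r^2+t^2)⁻¹) = fun t : ℝ => r⁻¹^2 * ((1+(t/r)^2)⁻¹) :=
  funext fun t => by field_simp

lemma int_g1 : Integrable fun t : ℝ => (r^2+t^2)⁻¹ := by
  rw [hfe1 hr]; exact (integrable_inv_one_add_sq.comp_div hr.ne').const_mul _

lemma val_g1 : ∫ t : ℝ, (r^2+t^2)⁻¹ = π / r := by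
  rw [hfe1 hr, MeasureTheory.integral_const_mul, MeasureTheory.Measure.integral_comp_div (fun u : ℝ => (1+u^2)⁻¹) r,
    integral_univ_inv_one_add_sq, abs_of_pos hr, smul_eq_mul]
  field_simp

lemma hfe2 : (fun t : ℝ => ((r^2+t^2)⁻¹)^2) = fun t : ℝ => r⁻¹^4 * (((1+(t/r)^2)⁻¹)^2) :=
  funext fun t => by field_simp

lemma int_g2 : Integrable fun t : ℝ => ((r^2+t^2)⁻¹)^2 := by
  rw [hfe2 hr]; exact (integrable_one_add_sq_sq.comp_div hr.ne').const_mul _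

lemma val_g2 : ∫ t : ℝ, ((r^2+t^2)⁻¹)^2 = π / (2*r^3) := by
  rw [hfe2 hr, MeasureTheory.integral_const_mul, MeasureTheory.Measure.integral_comp_div (fun u : ℝ => ((1+u^2)⁻¹)^2) r,
    integral_one_add_sq_sq, abs_of_pos hr, smul_eq_mul]
  field_simp

lemma int_g3 : Integrable fun t : ℝ => t * ((r^2+t^2)⁻¹)^2 := by
  refine ((int_g1 hr).const_mul (1/(2*r))).mono
    ((continuous_id.mul ((cont_inv r hr).pow 2)).aestronglyMeasurable) ?_
  filter_upwards with t
  have hA : (0:ℝ) < r^2+t^2 := by positivity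
  have hAi : (0:ℝ) ≤ (r^2+t^2)⁻¹ := by positivity
  rw [norm_mul, norm_mul, norm_pow, Real.norm_eq_abs, Real.norm_eq_abs, Real.norm_eq_abs,
    abs_of_nonneg hAi, abs_of_pos (by positivity : (0:ℝ) < 1/(2*r)), pow_two]
  have key : |t| * (r^2+t^2)⁻¹ ≤ 1/(2*r) := by
    rw [← div_eq_mul_inv, div_le_div_iff₀ hA (by positivity)]
    nlinarith [sq_abs t, sq_nonneg (r - |t|), abs_nonneg t]
  calc |t| * ((r^2+t^2)⁻¹ * (r^2+t^2)⁻¹) = (|t| * (r^2+t^2)⁻¹) * (r^2+t^2)⁻¹ := by ring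
    _ ≤ (1/(2*r)) * (r^2+t^2)⁻¹ := mul_le_mul_of_nonneg_right key hAi

lemma tendsto_sq_inv_top : Tendsto (fun t : ℝ => (r^2+t^2)⁻¹) atTop (𝓝 0) := by
  have h : Tendsto (fun t : ℝ => r^2+t^2) atTop atTop :=
    tendsto_atTop_add_const_left _ _ (tendsto_pow_atTop two_ne_zero)
  exact h.inv_tendsto_atTop

lemma tendsto_sq_inv_bot : Tendsto (fun t : ℝ => (r^2+t^2)⁻¹) atBot (𝓝 0) := by
  have h := (tendsto_sq_inv_top hr).comp tendsto_neg_atBot_atTop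
  exact h.congr (fun t => by norm_num)

lemma val_g3 : ∫ t : ℝ, t * ((r^2+t^2)⁻¹)^2 = 0 := by
  have hderiv : ∀ t : ℝ, HasDerivAt (fun t : ℝ => -(1/2) * (r^2+t^2)⁻¹)
      (t * ((r^2+t^2)⁻¹)^2) t := by
    intro t
    have hA : (0:ℝ) < r^2+t^2 := by positivity
    have h1 : HasDerivAt (fun t : ℝ => r^2+t^2) (2*t) t := by
      simpa using (hasDerivAt_pow 2 t).const_add (r^2)
    have h2 := (h1.inv hA.ne').const_mul (-(1/2) : ℝ)
    refine h2.congr_deriv ?_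
    field_simp
  have hb := (tendsto_sq_inv_bot hr).const_mul (-(1/2) : ℝ)
  have ht := (tendsto_sq_inv_top hr).const_mul (-(1/2) : ℝ)
  rw [mul_zero] at hb ht
  simpa using MeasureTheory.integral_of_hasDerivAt_of_tendsto hderiv (int_g3 hr) hb ht

lemma hfe4 : (fun t : ℝ => t^2 * ((r^2+t^2)⁻¹)^2)
    = fun t : ℝ => (r^2+t^2)⁻¹ - r^2 * ((r^2+t^2)⁻¹)^2 :=
  funext fun t => by field_simp; ring

lemma int_g4 : Integrable fun t : ℝ => t^2 * ((r^2+t^2)⁻¹)^2 := by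
  rw [hfe4 hr]; exact (int_g1 hr).sub ((int_g2 hr).const_mul _)

lemma val_g4 : ∫ t : ℝ, t^2 * ((r^2+t^2)⁻¹)^2 = π / (2*r) := by
  rw [hfe4 hr, MeasureTheory.integral_sub (int_g1 hr) ((int_g2 hr).const_mul _),
    MeasureTheory.integral_const_mul, val_g1 hr, val_g2 hr]
  field_simp
  ring

end Scaled


section Cases
variable {r : ℝ} (hr : 0 < r) {μ lam : ℝ} (hμ : μ ≠ 0) (ha : lam + 2 * μ ≠ 0)
include hr hμ ha

lemma case_cc (δ a b : ℝ) :
    ∫ t : ℝ, -(1 / (μ * (r^2+t^2))) * (δ - (lam+μ)/(lam+2*μ) * (a * b / (r^2+t^2)))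
      = -(δ/μ) * (π/r) + ((lam+μ)/(lam+2*μ)*a*b/μ) * (π/(2*r^3)) := by
  have h := MeasureTheory.integral_congr_ae (μ := volume)
    (g := fun t : ℝ => (-(δ/μ)) * (r^2+t^2)⁻¹ + ((lam+μ)/(lam+2*μ)*a*b/μ) * ((r^2+t^2)⁻¹)^2)
    (f := fun t : ℝ => -(1 / (μ * (r^2+t^2))) * (δ - (lam+μ)/(lam+2*μ) * (a * b / (r^2+t^2))))
    (Filter.Eventually.of_forall fun t => by
      have hA : (r^2+t^2) ≠ 0 := by positivity
      field_simp [hA]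
      ring)
  rw [h, MeasureTheory.integral_add ((int_g1 hr).const_mul _) ((int_g2 hr).const_mul _),
    MeasureTheory.integral_const_mul, MeasureTheory.integral_const_mul, val_g1 hr, val_g2 hr]
  try ring

lemma case_ct (a : ℝ) :
    ∫ t : ℝ, -(1 / (μ * (r^2+t^2))) * (0 - (lam+μ)/(lam+2*μ) * (a * t / (r^2+t^2))) = 0 := by
  have h := MeasureTheory.integral_congr_ae (μ := volume)
    (g := fun t : ℝ => ((lam+μ)/(lam+2*μ)*a/μ) * (t * ((r^2+t^2)⁻¹)^2))
    (f := fun t : ℝ => -(1 / (μ * (r^2+t^2))) * (0 - (lam+μ)/(lam+2*μ) * (a * t / (r^2+t^2))))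
    (Filter.Eventually.of_forall fun t => by
      have hA : (r^2+t^2) ≠ 0 := by positivity
      field_simp [hA]
      ring)
  rw [h, MeasureTheory.integral_const_mul, val_g3 hr, mul_zero]

lemma case_tc (a : ℝ) :
    ∫ t : ℝ, -(1 / (μ * (r^2+t^2))) * (0 - (lam+μ)/(lam+2*μ) * (t * a / (r^2+t^2))) = 0 := by
  have h := MeasureTheory.integral_congr_ae (μ := volume)
    (g := fun t : ℝ => ((lam+μ)/(lam+2*μ)*a/μ) * (t * ((r^2+t^2)⁻¹)^2))
    (f := fun t : ℝ => -(1 / (μ * (r^2+t^2))) * (0 - (lam+μ)/(lam+2*μ) * (t * a / (r^2+t^2))))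
    (Filter.Eventually.of_forall fun t => by
      have hA : (r^2+t^2) ≠ 0 := by positivity
      field_simp [hA]
      ring)
  rw [h, MeasureTheory.integral_const_mul, val_g3 hr, mul_zero]

lemma case_tt :
    ∫ t : ℝ, -(1 / (μ * (r^2+t^2))) * (1 - (lam+μ)/(lam+2*μ) * (t * t / (r^2+t^2)))
      = -(1/μ) * (π/r) + ((lam+μ)/(lam+2*μ)/μ) * (π/(2*r)) := by
  have h := MeasureTheory.integral_congr_ae (μ := volume)
    (g := fun t : ℝ => (-(1/μ)) * (r^2+t^2)⁻¹ + ((lam+μ)/(lam+2*μ)/μ) * (t^2 * ((r^2+t^2)⁻¹)^2))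
    (f := fun t : ℝ => -(1 / (μ * (r^2+t^2))) * (1 - (lam+μ)/(lam+2*μ) * (t * t / (r^2+t^2))))
    (Filter.Eventually.of_forall fun t => by
      have hA : (r^2+t^2) ≠ 0 := by positivity
      field_simp [hA]
      ring)
  rw [h, MeasureTheory.integral_add ((int_g1 hr).const_mul _) ((int_g4 hr).const_mul _),
    MeasureTheory.integral_const_mul, MeasureTheory.integral_const_mul, val_g1 hr, val_g4 hr]
  try ring

end Cases

end Aux

/-- The principal symbol of the single layer potential operator: entrywise,
`(1/2π) ∫ ℓ((ξ₁,ξ₂,t))⁻¹ dt = -(1/(2μ|ξ'|)) (E - ((λ+μ)/(2(λ+2μ))) (Λ̃(ξ') + E₃₃))`. -/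
theorem stmt7 (μ lam : ℝ) (hμ : 0 < μ) (hconv : 0 < 3 * lam + 2 * μ)
    (ξ₁ ξ₂ : ℝ) (hξ : ξ₁ ≠ 0 ∨ ξ₂ ≠ 0) (j k : Fin 3) :
    (1 / (2 * Real.pi)) * (∫ t : ℝ, ((ell μ lam ![ξ₁, ξ₂, t])⁻¹) j k) =
      (-((1 / (2 * μ * Real.sqrt (ξ₁ ^ 2 + ξ₂ ^ 2))) •
          ((1 : Matrix (Fin 3) (Fin 3) ℝ)
            - ((lam + μ) / (2 * (lam + 2 * μ))) • (LamTilde ξ₁ ξ₂ + E33)))) j k := by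
  have hμ' : μ ≠ 0 := hμ.ne'
  have ha : lam + 2 * μ ≠ 0 := by nlinarith
  have hspos : 0 < ξ₁^2 + ξ₂^2 := by
    rcases hξ with h | h
    · positivity
    · positivity
  set r := Real.sqrt (ξ₁ ^ 2 + ξ₂ ^ 2) with hrdef
  have hr : 0 < r := Real.sqrt_pos.2 hspos
  have hr2 : r^2 = ξ₁^2 + ξ₂^2 := Real.sq_sqrt hspos.le
  have hπ : Real.pi ≠ 0 := Real.pi_ne_zero
  have hent : ∀ t : ℝ, (ell μ lam ![ξ₁, ξ₂, t])⁻¹ j k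
      = -(1 / (μ * (r^2+t^2))) * ((if j = k then (1:ℝ) else 0)
          - (lam+μ)/(lam+2*μ) * ((![ξ₁, ξ₂, t]) j * (![ξ₁, ξ₂, t]) k / (r^2+t^2))) := by
    intro t
    have hs : (∑ i, (![ξ₁, ξ₂, t] : Fin 3 → ℝ) i ^ 2) ≠ 0 := by
      rw [Fin.sum_univ_three]
      simp only [Matrix.cons_val_zero, Matrix.cons_val_one, Matrix.head_cons,
        Matrix.cons_val_two, Matrix.tail_cons]
      positivity
    rw [ell_inv μ lam hμ' ha _ hs]
    simp only [Matrix.smul_apply, Matrix.sub_apply, Matrix.one_apply, LamMat, smul_eq_mul,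
      Fin.sum_univ_three, Matrix.cons_val_zero, Matrix.cons_val_one, Matrix.head_cons,
      Matrix.cons_val_two, Matrix.tail_cons]
    rw [show ξ₁^2 + ξ₂^2 + t^2 = r^2 + t^2 by rw [hr2]]
  simp only [hent]
  fin_cases j <;> fin_cases k <;>
    simp only [Matrix.cons_val_zero, Matrix.cons_val_one, Matrix.head_cons, Matrix.cons_val_two,
      Matrix.tail_cons, Fin.reduceFinMk, Fin.reduceEq, reduceIte, Fin.isValue, Fin.zero_eta, Fin.mk_one,
      Matrix.neg_apply, Matrix.smul_apply, Matrix.sub_apply, Matrix.add_apply, Matrix.one_apply,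
      LamTilde, E33, smul_eq_mul, and_self, and_true, true_and, and_false, false_and, if_true,
      if_false, mul_zero, zero_mul]
  · rw [case_cc hr hμ' ha 1 ξ₁ ξ₁]
    rw [← hr2]; field_simp; ring
  · rw [case_cc hr hμ' ha 0 ξ₁ ξ₂]
    rw [← hr2]; field_simp; ring
  · rw [case_ct hr hμ' ha ξ₁]
    simp
  · rw [case_cc hr hμ' ha 0 ξ₂ ξ₁]
    rw [← hr2]; field_simp; ring
  · rw [case_cc hr hμ' ha 1 ξ₂ ξ₂]
    rw [← hr2]; field_simp; ring
  · rw [case_ct hr hμ' ha ξ₂]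
    simp
  · rw [case_tc hr hμ' ha ξ₁]
    simp
  · rw [case_tc hr hμ' ha ξ₂]
    simp
  · rw [case_tt hr hμ' ha]
    rw [← hr2]; field_simp; ring
end

section
/- Let μ > 0, λ + 2μ > 0, k₀ = μ/(2(λ+2μ)), and for nonzero ξ' = (ξ₁,ξ₂) ∈ ℝ² let σ_B(ξ') = (i k₀/|ξ'|) · [[0,0,−ξ₁],[0,0,−ξ₂],[ξ₁,ξ₂,0]] ∈ M₃(ℂ). Then σ_B(ξ') is Hermitian (equal to its conjugate transpose), and it satisfies the polynomial identity σ_B(ξ') (σ_B(ξ')² − k₀² E) = 0, i.e. σ_B(ξ')³ = k₀² σ_B(ξ'). This is the algebraic identity of the principal symbol underlying the polynomial compactness 𝕂(𝕂² − k₀²) ∈ 𝔖_∞ of the 3D elastic Neumann–Poincaré operator. -/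
open Matrix

/-- The principal symbol `σ_B(ξ') = (i k₀/|ξ'|) [[0,0,-ξ₁],[0,0,-ξ₂],[ξ₁,ξ₂,0]]` of the
3D elastic Neumann–Poincaré operator. -/
noncomputable def sigmaB (k₀ ξ₁ ξ₂ : ℝ) : Matrix (Fin 3) (Fin 3) ℂ :=
  ((Complex.I * (k₀ : ℂ)) / (Real.sqrt (ξ₁ ^ 2 + ξ₂ ^ 2) : ℂ)) •
    !![0, 0, -(ξ₁ : ℂ); 0, 0, -(ξ₂ : ℂ); (ξ₁ : ℂ), (ξ₂ : ℂ), 0]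

set_option maxHeartbeats 1000000 in
lemma cube_aux (ξ₁ ξ₂ : ℝ) :
    (!![0, 0, -(ξ₁ : ℂ); 0, 0, -(ξ₂ : ℂ); (ξ₁ : ℂ), (ξ₂ : ℂ), 0] : Matrix (Fin 3) (Fin 3) ℂ) *
      (!![0, 0, -(ξ₁ : ℂ); 0, 0, -(ξ₂ : ℂ); (ξ₁ : ℂ), (ξ₂ : ℂ), 0] *
        !![0, 0, -(ξ₁ : ℂ); 0, 0, -(ξ₂ : ℂ); (ξ₁ : ℂ), (ξ₂ : ℂ), 0]) =
    (-((ξ₁ : ℂ) ^ 2 + (ξ₂ : ℂ) ^ 2)) •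
      !![0, 0, -(ξ₁ : ℂ); 0, 0, -(ξ₂ : ℂ); (ξ₁ : ℂ), (ξ₂ : ℂ), 0] := by
  ext i j
  fin_cases i <;> fin_cases j <;>
    simp [Matrix.mul_apply, Fin.sum_univ_three] <;> ring

set_option maxHeartbeats 1000000 in
lemma hermitian_aux (ξ₁ ξ₂ : ℝ) :
    (!![0, 0, -(ξ₁ : ℂ); 0, 0, -(ξ₂ : ℂ); (ξ₁ : ℂ), (ξ₂ : ℂ), 0] : Matrix (Fin 3) (Fin 3) ℂ)ᴴ =
      -!![0, 0, -(ξ₁ : ℂ); 0, 0, -(ξ₂ : ℂ); (ξ₁ : ℂ), (ξ₂ : ℂ), 0] := by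
  ext i j
  fin_cases i <;> fin_cases j <;> simp [Matrix.conjTranspose_apply]

/-- With `k₀ = μ/(2(λ+2μ))`, the symbol `σ_B(ξ')` is Hermitian and satisfies
`σ_B(ξ')(σ_B(ξ')² - k₀² E) = 0`, the identity underlying the polynomial compactness of
the 3D elastic Neumann–Poincaré operator. -/
theorem stmt8 (μ lam : ℝ) (hμ : 0 < μ) (h2 : 0 < lam + 2 * μ)
    (k₀ : ℝ) (hk₀ : k₀ = μ / (2 * (lam + 2 * μ)))
    (ξ₁ ξ₂ : ℝ) (hξ : ξ₁ ≠ 0 ∨ ξ₂ ≠ 0) :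
    (sigmaB k₀ ξ₁ ξ₂)ᴴ = sigmaB k₀ ξ₁ ξ₂ ∧
      sigmaB k₀ ξ₁ ξ₂ *
        (sigmaB k₀ ξ₁ ξ₂ * sigmaB k₀ ξ₁ ξ₂
          - ((k₀ : ℂ) ^ 2) • (1 : Matrix (Fin 3) (Fin 3) ℂ)) = 0 := by
  have hpos : 0 < ξ₁ ^ 2 + ξ₂ ^ 2 := by
    rcases hξ with h | h
    · positivity
    · positivity
  have hs : Real.sqrt (ξ₁ ^ 2 + ξ₂ ^ 2) ^ 2 = ξ₁ ^ 2 + ξ₂ ^ 2 :=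
    Real.sq_sqrt hpos.le
  have hsne : (Real.sqrt (ξ₁ ^ 2 + ξ₂ ^ 2) : ℂ) ≠ 0 :=
    Complex.ofReal_ne_zero.mpr (Real.sqrt_pos.mpr hpos).ne'
  have hsC : (Real.sqrt (ξ₁ ^ 2 + ξ₂ ^ 2) : ℂ) ^ 2 = (ξ₁ : ℂ) ^ 2 + (ξ₂ : ℂ) ^ 2 := by
    exact_mod_cast congrArg (Complex.ofReal) hs
  set s : ℂ := (Real.sqrt (ξ₁ ^ 2 + ξ₂ ^ 2) : ℂ) with hsdef
  set c : ℂ := (Complex.I * (k₀ : ℂ)) / s with hc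
  set A : Matrix (Fin 3) (Fin 3) ℂ :=
    !![0, 0, -(ξ₁ : ℂ); 0, 0, -(ξ₂ : ℂ); (ξ₁ : ℂ), (ξ₂ : ℂ), 0] with hA
  have hσ : sigmaB k₀ ξ₁ ξ₂ = c • A := rfl
  constructor
  · rw [hσ, Matrix.conjTranspose_smul, hermitian_aux ξ₁ ξ₂]
    have hcc : star c = -c := by
      rw [hc]
      simp only [star_div₀, star_mul', Complex.star_def, Complex.conj_I, Complex.conj_ofReal,
        hsdef]
      ring
    rw [hcc, neg_smul, smul_neg, neg_neg]
  · rw [hσ]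
    have key : A * (A * A) = (-((ξ₁ : ℂ) ^ 2 + (ξ₂ : ℂ) ^ 2)) • A := cube_aux ξ₁ ξ₂
    have hc2 : c ^ 2 * (-((ξ₁ : ℂ) ^ 2 + (ξ₂ : ℂ) ^ 2)) = (k₀ : ℂ) ^ 2 := by
      rw [hc, div_pow, ← hsC]
      field_simp
      rw [Complex.I_sq]
      ring
    calc (c • A) * ((c • A) * (c • A) - ((k₀ : ℂ) ^ 2) • (1 : Matrix (Fin 3) (Fin 3) ℂ))
        = (c * c ^ 2) • (A * (A * A)) - (c * (k₀ : ℂ) ^ 2) • A := by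
          rw [Matrix.mul_sub]
          simp only [Matrix.smul_mul, Matrix.mul_smul, smul_smul, Matrix.mul_one]
          ring_nf
      _ = 0 := by
          rw [key, smul_smul, mul_assoc, hc2, sub_eq_zero, mul_comm]
end

section
/- Let μ > 0 and λ be real with λ + 2μ > 0, and set k₀ = μ/(2(λ+2μ)). Define for integers j ≥ 1 the sequences λ_j⁰ = 3/(2(2j+1)), λ_j⁺ = (3λ − 2μ(2j² − 2j − 3))/(2(λ+2μ)(4j² − 1)), λ_j⁻ = (−3λ + 2μ(2j² + 2j − 3))/(2(λ+2μ)(4j² − 1)) (the eigenvalues of the elastic Neumann–Poincaré operator on the unit sphere). Then λ_j⁰ → 0, λ_j⁺ → −k₀ and λ_j⁻ → k₀ as j → ∞; moreover j·λ_j⁰ → 3/4, j·(λ_j⁺ + k₀) → k₀ and j·(λ_j⁻ − k₀) → k₀, so all three sequences converge to their limits (the three points 0, ±k₀ of the essential spectrum) at the rate O(1/j). -/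
open Filter Topology

/-- The three sequences of eigenvalues of the elastic Neumann–Poincaré operator on the
unit sphere converge to the three points `0, -k₀, k₀` of the essential spectrum at the
rate `O(1/j)`: `j·λ_j⁰ → 3/4`, `j·(λ_j⁺ + k₀) → k₀`, `j·(λ_j⁻ - k₀) → k₀`. -/
theorem stmt14 (μ lam : ℝ) (hμ : 0 < μ) (h2 : 0 < lam + 2 * μ)
    (k₀ : ℝ) (hk₀ : k₀ = μ / (2 * (lam + 2 * μ)))
    (l0 lp lm : ℕ → ℝ)
    (hl0 : ∀ j : ℕ, 1 ≤ j → l0 j = 3 / (2 * (2 * (j : ℝ) + 1)))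
    (hlp : ∀ j : ℕ, 1 ≤ j →
      lp j = (3 * lam - 2 * μ * (2 * (j : ℝ) ^ 2 - 2 * (j : ℝ) - 3))
        / (2 * (lam + 2 * μ) * (4 * (j : ℝ) ^ 2 - 1)))
    (hlm : ∀ j : ℕ, 1 ≤ j →
      lm j = (-(3 * lam) + 2 * μ * (2 * (j : ℝ) ^ 2 + 2 * (j : ℝ) - 3))
        / (2 * (lam + 2 * μ) * (4 * (j : ℝ) ^ 2 - 1))) :
    Tendsto l0 atTop (𝓝 0) ∧
    Tendsto lp atTop (𝓝 (-k₀)) ∧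
    Tendsto lm atTop (𝓝 k₀) ∧
    Tendsto (fun j : ℕ => (j : ℝ) * l0 j) atTop (𝓝 (3 / 4)) ∧
    Tendsto (fun j : ℕ => (j : ℝ) * (lp j + k₀)) atTop (𝓝 k₀) ∧
    Tendsto (fun j : ℕ => (j : ℝ) * (lm j - k₀)) atTop (𝓝 k₀) := by
  have hD : lam + 2 * μ ≠ 0 := ne_of_gt h2
  have hx : Tendsto (fun j : ℕ => ((j : ℝ))⁻¹) atTop (𝓝 0) :=
    tendsto_inv_atTop_zero.comp tendsto_natCast_atTop_atTop
  -- generic facts for j ≥ 1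
  have key : ∀ j : ℕ, 1 ≤ j → (j : ℝ) ≠ 0 ∧ 4 * (j : ℝ) ^ 2 - 1 ≠ 0 := by
    intro j hj
    have hj1 : (1 : ℝ) ≤ (j : ℝ) := by exact_mod_cast hj
    constructor
    · linarith
    · nlinarith
  -- denominator limits
  have hden : Tendsto (fun j : ℕ => 2 * (lam + 2 * μ) * (4 - (((j : ℝ))⁻¹) ^ 2))
      atTop (𝓝 (2 * (lam + 2 * μ) * (4 - 0 ^ 2))) :=
    tendsto_const_nhds.mul (tendsto_const_nhds.sub (hx.pow 2))
  have hdenne : 2 * (lam + 2 * μ) * (4 - (0:ℝ) ^ 2) ≠ 0 := by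
    have : (0:ℝ) < 2 * (lam + 2 * μ) * (4 - 0 ^ 2) := by nlinarith
    exact ne_of_gt this
  refine ⟨?_, ?_, ?_, ?_, ?_, ?_⟩
  · -- l0 → 0
    have h1 : Tendsto (fun j : ℕ => 3 * ((j : ℝ))⁻¹ / (2 * (2 + ((j : ℝ))⁻¹)))
        atTop (𝓝 (3 * 0 / (2 * (2 + 0)))) :=
      (tendsto_const_nhds.mul hx).div
        (tendsto_const_nhds.mul (tendsto_const_nhds.add hx)) (by norm_num)
    norm_num at h1
    refine h1.congr' ?_
    filter_upwards [eventually_ge_atTop 1] with j hj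
    obtain ⟨hj0, _⟩ := key j hj
    rw [hl0 j hj]
    field_simp
  · -- lp → -k₀
    have h1 : Tendsto (fun j : ℕ =>
        (3 * lam * (((j : ℝ))⁻¹) ^ 2 - 2 * μ * (2 - 2 * ((j : ℝ))⁻¹ - 3 * (((j : ℝ))⁻¹) ^ 2))
          / (2 * (lam + 2 * μ) * (4 - (((j : ℝ))⁻¹) ^ 2)))
        atTop (𝓝 ((3 * lam * 0 ^ 2 - 2 * μ * (2 - 2 * 0 - 3 * 0 ^ 2))
          / (2 * (lam + 2 * μ) * (4 - 0 ^ 2)))) :=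
      ((tendsto_const_nhds.mul (hx.pow 2)).sub
        (tendsto_const_nhds.mul ((tendsto_const_nhds.sub (tendsto_const_nhds.mul hx)).sub
          (tendsto_const_nhds.mul (hx.pow 2))))).div hden hdenne
    have hval : (3 * lam * (0:ℝ) ^ 2 - 2 * μ * (2 - 2 * 0 - 3 * 0 ^ 2))
        / (2 * (lam + 2 * μ) * (4 - 0 ^ 2)) = -k₀ := by
      rw [hk₀]; field_simp; ring
    rw [hval] at h1
    refine h1.congr' ?_
    filter_upwards [eventually_ge_atTop 1] with j hj
    obtain ⟨hj0, h4⟩ := key j hj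
    rw [hlp j hj]
    field_simp
  · -- lm → k₀
    have h1 : Tendsto (fun j : ℕ =>
        (-(3 * lam) * (((j : ℝ))⁻¹) ^ 2 + 2 * μ * (2 + 2 * ((j : ℝ))⁻¹ - 3 * (((j : ℝ))⁻¹) ^ 2))
          / (2 * (lam + 2 * μ) * (4 - (((j : ℝ))⁻¹) ^ 2)))
        atTop (𝓝 ((-(3 * lam) * 0 ^ 2 + 2 * μ * (2 + 2 * 0 - 3 * 0 ^ 2))
          / (2 * (lam + 2 * μ) * (4 - 0 ^ 2)))) :=
      ((tendsto_const_nhds.mul (hx.pow 2)).add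
        (tendsto_const_nhds.mul ((tendsto_const_nhds.add (tendsto_const_nhds.mul hx)).sub
          (tendsto_const_nhds.mul (hx.pow 2))))).div hden hdenne
    have hval : (-(3 * lam) * (0:ℝ) ^ 2 + 2 * μ * (2 + 2 * 0 - 3 * 0 ^ 2))
        / (2 * (lam + 2 * μ) * (4 - 0 ^ 2)) = k₀ := by
      rw [hk₀]; field_simp; ring
    rw [hval] at h1
    refine h1.congr' ?_
    filter_upwards [eventually_ge_atTop 1] with j hj
    obtain ⟨hj0, h4⟩ := key j hj
    rw [hlm j hj]
    field_simp
  · -- j * l0 j → 3/4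
    have h1 : Tendsto (fun j : ℕ => 3 / (2 * (2 + ((j : ℝ))⁻¹)))
        atTop (𝓝 (3 / (2 * (2 + 0)))) :=
      tendsto_const_nhds.div (tendsto_const_nhds.mul (tendsto_const_nhds.add hx)) (by norm_num)
    norm_num at h1
    refine h1.congr' ?_
    filter_upwards [eventually_ge_atTop 1] with j hj
    obtain ⟨hj0, _⟩ := key j hj
    rw [hl0 j hj]
    field_simp
  · -- j * (lp j + k₀) → k₀
    have h1 : Tendsto (fun j : ℕ =>
        (3 * lam * ((j : ℝ))⁻¹ + 4 * μ + 5 * μ * ((j : ℝ))⁻¹)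
          / (2 * (lam + 2 * μ) * (4 - (((j : ℝ))⁻¹) ^ 2)))
        atTop (𝓝 ((3 * lam * 0 + 4 * μ + 5 * μ * 0)
          / (2 * (lam + 2 * μ) * (4 - 0 ^ 2)))) :=
      (((tendsto_const_nhds.mul hx).add tendsto_const_nhds).add
        (tendsto_const_nhds.mul hx)).div hden hdenne
    have hval : (3 * lam * (0:ℝ) + 4 * μ + 5 * μ * 0)
        / (2 * (lam + 2 * μ) * (4 - 0 ^ 2)) = k₀ := by
      rw [hk₀]; field_simp; ring
    rw [hval] at h1
    refine h1.congr' ?_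
    filter_upwards [eventually_ge_atTop 1] with j hj
    obtain ⟨hj0, h4⟩ := key j hj
    rw [hlp j hj, hk₀]
    have h5 : (j:ℝ) ^ 2 * 4 - 1 ≠ 0 := by rw [mul_comm]; exact h4
    field_simp
    ring
  · -- j * (lm j - k₀) → k₀
    have h1 : Tendsto (fun j : ℕ =>
        (-(3 * lam) * ((j : ℝ))⁻¹ + 4 * μ - 5 * μ * ((j : ℝ))⁻¹)
          / (2 * (lam + 2 * μ) * (4 - (((j : ℝ))⁻¹) ^ 2)))
        atTop (𝓝 ((-(3 * lam) * 0 + 4 * μ - 5 * μ * 0)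
          / (2 * (lam + 2 * μ) * (4 - 0 ^ 2)))) :=
      (((tendsto_const_nhds.mul hx).add tendsto_const_nhds).sub
        (tendsto_const_nhds.mul hx)).div hden hdenne
    have hval : (-(3 * lam) * (0:ℝ) + 4 * μ - 5 * μ * 0)
        / (2 * (lam + 2 * μ) * (4 - 0 ^ 2)) = k₀ := by
      rw [hk₀]; field_simp; ring
    rw [hval] at h1
    refine h1.congr' ?_
    filter_upwards [eventually_ge_atTop 1] with j hj
    obtain ⟨hj0, h4⟩ := key j hj
    rw [hlm j hj, hk₀]
    have h5 : (j:ℝ) ^ 2 * 4 - 1 ≠ 0 := by rw [mul_comm]; exact h4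
    field_simp
    ring
end
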